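/- The conditional variance of the importance-weighted martingale difference Z_t is bounded by ∑_{k=1}^{n_e} E[p_{t,k} | F_{t-1}] / q_min², where q_min = min_k q_{t,k}. -/

import Mathlib

open MeasureTheory

/-- the conditional variance of the importance-weighted martingale
difference `Z_t` is bounded by `∑_k E[p_{t,k} | F_{t-1}] / q_min²`.  Here `m = F_{t-1}`,
`Z ω = ∑_k (1_{k_t=k} Q_k / (q_k p_k)) (1 - c_k)(ℓ(r,x_t,k) - ℓ(r',x_t,k)) - (𝓔(r) - 𝓔(r'))`,
the per-class loss variation is bounded by the sampling probability
(`|Δℓ_k| ≤ p_k`, since `r, r'` lie in the version space), costs are binary,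
`E[1_{k_t=k} Q_k | F_{t-1}] = q_k E[p_k | F_{t-1}]`, and `q_k ≥ q_min > 0` with
`∑_k q_k = 1`. -/
theorem conditional_variance_bound
    {Ω : Type*} {m0 : MeasurableSpace Ω} (μ : Measure Ω) [IsProbabilityMeasure μ]
    (m : MeasurableSpace Ω) (hm : m ≤ m0)
    (n : ℕ) (kt : Ω → Fin n) (Q : Fin n → Ω → ℝ)
    (hQ01 : ∀ k ω, Q k ω = 0 ∨ Q k ω = 1)
    (q : Fin n → ℝ) (qmin : ℝ) (hqmin : 0 < qmin) (hq : ∀ k, qmin ≤ q k)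
    (hqsum : ∑ k, q k = 1)
    (p : Fin n → Ω → ℝ) (hp0 : ∀ k ω, 0 ≤ p k ω)
    (hpint : ∀ k, Integrable (p k) μ)
    (c lr lr' : Fin n → Ω → ℝ)
    (hc : ∀ k ω, c k ω = 0 ∨ c k ω = 1)
    (hbound : ∀ k ω, |lr k ω - lr' k ω| ≤ p k ω)
    (hmeanA : ∀ k, μ[fun ω => (if kt ω = k then (1 : ℝ) else 0) * Q k ω | m]
        =ᵐ[μ] fun ω => q k * (μ[p k | m]) ω)
    (Er Er' : ℝ) (Z : Ω → ℝ)
    (hZ : ∀ ω, Z ω = (∑ k, (if kt ω = k then (1 : ℝ) else 0) * Q k ω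
        / (q k * p k ω) * (1 - c k ω) * (lr k ω - lr' k ω)) - (Er - Er'))
    (hZint : Integrable Z μ) (hZsqint : Integrable (fun ω => (Z ω) ^ 2) μ) :
    ∀ᵐ ω ∂μ, (μ[fun ω' => (Z ω') ^ 2 | m]) ω - ((μ[Z | m]) ω) ^ 2
      ≤ (∑ k, (μ[p k | m]) ω) / qmin ^ 2 := by
  classical
  haveI : SigmaFinite (μ.trim hm) := by infer_instance
  set C := Er - Er' with hC
  set f : Fin n → Ω → ℝ := fun k ω => (if kt ω = k then (1 : ℝ) else 0) * Q k ω with hfdef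
  set term : Fin n → Ω → ℝ := fun k ω =>
    f k ω / (q k * p k ω) * (1 - c k ω) * (lr k ω - lr' k ω) with htermdef
  have hq1 : ∀ k, q k ≤ 1 := by
    intro k
    calc q k ≤ ∑ j, q j :=
          Finset.single_le_sum (fun j _ => le_trans hqmin.le (hq j)) (Finset.mem_univ k)
      _ = 1 := hqsum
  have hmeanA' : ∀ k, μ[f k | m] =ᵐ[μ] fun ω => q k * (μ[p k | m]) ω := fun k => hmeanA k
  have hZ' : ∀ ω, Z ω = (∑ k, term k ω) - C := by
    intro ω; exact hZ ω
  have hf01 : ∀ k ω, f k ω = 0 ∨ f k ω = 1 := by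
    intro k ω
    by_cases h : kt ω = k
    · simpa [hfdef, h] using hQ01 k ω
    · left; simp [hfdef, h]
  have hf0 : ∀ k ω, 0 ≤ f k ω := by
    intro k ω; rcases hf01 k ω with h | h <;> simp [h]
  have hterm_zero : ∀ k ω, kt ω ≠ k → term k ω = 0 := by
    intro k ω h; simp [htermdef, hfdef, h]
  have hterm_sq : ∀ k ω, (term k ω) ^ 2 ≤ f k ω / qmin ^ 2 := by
    intro k ω
    rcases hf01 k ω with h | h
    · simp [htermdef, h]
    · rcases eq_or_lt_of_le (hp0 k ω) with hp | hp
      · have hΔ : lr k ω - lr' k ω = 0 := by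
          have := hbound k ω; rw [← hp] at this
          exact abs_eq_zero.mp (le_antisymm this (abs_nonneg _))
        have ht0 : term k ω = 0 := by simp [htermdef, hΔ]
        rw [ht0, h]
        have h00 : (0:ℝ) ^ 2 = 0 := by norm_num
        rw [h00]
        positivity
      · have hqk : 0 < q k := lt_of_lt_of_le hqmin (hq k)
        have h1c : (1 - c k ω) ^ 2 ≤ 1 := by
          rcases hc k ω with h' | h' <;> simp [h']
        have hΔ2 : (lr k ω - lr' k ω) ^ 2 ≤ (p k ω) ^ 2 := by
          have := hbound k ω
          nlinarith [abs_nonneg (lr k ω - lr' k ω), sq_abs (lr k ω - lr' k ω)]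
        have hterm_eq : term k ω =
            1 / (q k * p k ω) * (1 - c k ω) * (lr k ω - lr' k ω) := by
          simp only [htermdef, h]
        rw [hterm_eq, h]
        have hqp : 0 < q k * p k ω := mul_pos hqk hp
        rw [mul_pow, mul_pow, div_pow, one_pow, div_mul_eq_mul_div, div_mul_eq_mul_div,
          div_le_div_iff₀ (by positivity) (by positivity)]
        have hq2 : qmin ^ 2 ≤ (q k) ^ 2 := by nlinarith [hq k]
        nlinarith [sq_nonneg (lr k ω - lr' k ω), sq_nonneg (1 - c k ω), sq_nonneg (p k ω),
          mul_le_mul_of_nonneg_left hΔ2 (sq_nonneg (1 - c k ω)),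
          mul_le_mul_of_nonneg_left hq2 (sq_nonneg (p k ω)),
          mul_pos (mul_pos hqk hqk) (mul_pos hp hp)]
  set K : Finset (Fin n) := Finset.univ.filter (fun k => Integrable (f k) μ) with hKdef
  set W' : Ω → ℝ := fun ω => ∑ k ∈ K, term k ω with hW'def
  set S' : Ω → ℝ := fun ω => ∑ k ∈ K, f k ω / qmin ^ 2 with hS'def
  have hfK : ∀ k ∈ K, Integrable (f k) μ := by
    intro k hk; exact (Finset.mem_filter.mp hk).2
  have hS'int : Integrable S' μ :=
    integrable_finset_sum _ (fun k hk => (hfK k hk).div_const _)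
  -- pointwise bound (W')² ≤ S'
  have hWS : ∀ ω, (W' ω) ^ 2 ≤ S' ω := by
    intro ω
    have hS'nn : ∀ k ∈ K, (0:ℝ) ≤ f k ω / qmin ^ 2 := fun k _ =>
      div_nonneg (hf0 k ω) (by positivity)
    by_cases hmem : kt ω ∈ K
    · have hsum : W' ω = term (kt ω) ω := by
        rw [hW'def]
        exact Finset.sum_eq_single_of_mem (kt ω) hmem
          (fun k _ hne => hterm_zero k ω (Ne.symm hne))
      rw [hsum]
      exact le_trans (hterm_sq (kt ω) ω) (Finset.single_le_sum hS'nn hmem)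
    · have hsum : W' ω = 0 := by
        rw [hW'def]
        exact Finset.sum_eq_zero (fun k hk => hterm_zero k ω (fun e => hmem (e ▸ hk)))
      rw [hsum]
      simpa using Finset.sum_nonneg hS'nn
  -- for k outside K, the term is a.e. zero
  have hout : ∀ k, k ∉ K → term k =ᵐ[μ] 0 := by
    intro k hk
    have hnint : ¬ Integrable (f k) μ := by
      intro h; exact hk (Finset.mem_filter.mpr ⟨Finset.mem_univ k, h⟩)
    have h0 : μ[f k | m] = 0 := condExp_of_not_integrable hnint
    have h1 : (fun ω => q k * (μ[p k | m]) ω) =ᵐ[μ] 0 := by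
      refine ((hmeanA' k).symm.trans ?_)
      rw [h0]
    have hqk : (0:ℝ) < q k := lt_of_lt_of_le hqmin (hq k)
    have h2 : (μ[p k | m]) =ᵐ[μ] 0 := by
      filter_upwards [h1] with ω hω
      have : q k * (μ[p k | m]) ω = 0 := hω
      rcases mul_eq_zero.mp this with h | h
      · exact absurd h hqk.ne'
      · exact h
    have h3 : ∫ ω, p k ω ∂μ = 0 := by
      have hic := integral_condExp (μ := μ) (f := p k) hm
      rw [← hic, integral_congr_ae h2]
      simp
    have h4 : p k =ᵐ[μ] 0 :=
      (integral_eq_zero_iff_of_nonneg_ae (Filter.Eventually.of_forall (hp0 k)) (hpint k)).mp h3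
    filter_upwards [h4] with ω hω
    have hΔ : lr k ω - lr' k ω = 0 := by
      have := hbound k ω
      rw [hω] at this
      exact abs_eq_zero.mp (le_antisymm this (abs_nonneg _))
    simp [htermdef, hΔ]
  have hout_ae : ∀ᵐ ω ∂μ, ∀ k, k ∉ K → term k ω = 0 := by
    rw [ae_all_iff]
    intro k
    by_cases hk : k ∈ K
    · exact Filter.Eventually.of_forall (fun ω h => absurd hk h)
    · filter_upwards [hout k hk] with ω hω _
      exact hω
  have hW'Z : W' =ᵐ[μ] fun ω => Z ω + C := by
    filter_upwards [hout_ae] with ω hω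
    have : Z ω + C = ∑ k, term k ω := by rw [hZ' ω]; ring
    rw [this, hW'def]
    exact Finset.sum_subset (Finset.subset_univ K) (fun k _ hk => hω k hk)
  have hW2int : Integrable (fun ω => (Z ω + C) ^ 2) μ := by
    have he : (fun ω => (Z ω + C) ^ 2)
        = fun ω => Z ω ^ 2 + (2 * C) * Z ω + C ^ 2 := by
      funext ω; ring
    rw [he]
    exact (hZsqint.add (hZint.const_mul _)).add (integrable_const _)
  have hW'sq : (fun ω => (W' ω) ^ 2) =ᵐ[μ] (fun ω => (Z ω + C) ^ 2) := by
    filter_upwards [hW'Z] with ω hω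
    rw [hω]
  have hW'2int : Integrable (fun ω => (W' ω) ^ 2) μ := hW2int.congr hW'sq.symm
  -- conditional expectation computations
  have h1 : μ[fun ω => (Z ω + C) ^ 2 | m] =ᵐ[μ]
      fun ω => (μ[fun ω' => (Z ω') ^ 2 | m]) ω + 2 * C * (μ[Z | m]) ω + C ^ 2 := by
    have he : (fun ω => (Z ω + C) ^ 2)
        = (fun ω => (Z ω) ^ 2) + (2 * C) • Z + (fun _ => C ^ 2) := by
      funext ω; simp [smul_eq_mul]; ring
    rw [he]
    calc μ[(fun ω => (Z ω) ^ 2) + (2 * C) • Z + (fun _ => C ^ 2) | m]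
        =ᵐ[μ] μ[(fun ω => (Z ω) ^ 2) + (2 * C) • Z | m] + μ[(fun _ : Ω => C ^ 2) | m] :=
          condExp_add (hZsqint.add (hZint.smul (2 * C))) (integrable_const _) m
      _ =ᵐ[μ] (μ[fun ω => (Z ω) ^ 2 | m] + μ[(2 * C) • Z | m]) + μ[(fun _ : Ω => C ^ 2) | m] := by
          exact Filter.EventuallyEq.add (condExp_add hZsqint (hZint.smul (2 * C)) m)
            (Filter.EventuallyEq.refl _ _)
      _ =ᵐ[μ] (μ[fun ω => (Z ω) ^ 2 | m] + (2 * C) • μ[Z | m]) + μ[(fun _ : Ω => C ^ 2) | m] := by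
          exact Filter.EventuallyEq.add
            (Filter.EventuallyEq.add (Filter.EventuallyEq.refl _ _) (condExp_smul (2 * C) Z m))
            (Filter.EventuallyEq.refl _ _)
      _ =ᵐ[μ] fun ω => (μ[fun ω' => (Z ω') ^ 2 | m]) ω + 2 * C * (μ[Z | m]) ω + C ^ 2 := by
          rw [condExp_const hm]
          exact Filter.Eventually.of_forall (fun ω => by
            simp [Pi.add_apply, Pi.smul_apply, smul_eq_mul])
  have h2 : μ[fun ω => (Z ω + C) ^ 2 | m] =ᵐ[μ] μ[fun ω => (W' ω) ^ 2 | m] :=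
    condExp_congr_ae hW'sq.symm
  have h3 : μ[fun ω => (W' ω) ^ 2 | m] ≤ᵐ[μ] μ[S' | m] :=
    condExp_mono hW'2int hS'int (Filter.Eventually.of_forall hWS)
  -- compute μ[S'|m]
  have hS'eq : S' = ∑ k ∈ K, (qmin ^ 2)⁻¹ • f k := by
    funext ω
    rw [hS'def]
    simp only [Finset.sum_apply, Pi.smul_apply, smul_eq_mul]
    refine Finset.sum_congr rfl (fun k _ => ?_)
    rw [div_eq_mul_inv, mul_comm]
  have h4 : μ[S' | m] =ᵐ[μ] fun ω => ∑ k ∈ K, (qmin ^ 2)⁻¹ * (q k * (μ[p k | m]) ω) := by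
    rw [hS'eq]
    have hsumc : μ[∑ k ∈ K, (qmin ^ 2)⁻¹ • f k | m]
        =ᵐ[μ] ∑ k ∈ K, μ[(qmin ^ 2)⁻¹ • f k | m] :=
      condExp_finset_sum (fun k hk => (hfK k hk).smul _) m
    have hk_ae : ∀ᵐ ω ∂μ, ∀ k,
        (μ[(qmin ^ 2)⁻¹ • f k | m]) ω = (qmin ^ 2)⁻¹ * (q k * (μ[p k | m]) ω) := by
      rw [ae_all_iff]
      intro k
      filter_upwards [condExp_smul ((qmin ^ 2)⁻¹ : ℝ) (f k) (m := m) (μ := μ), hmeanA' k]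
        with ω hω1 hω2
      rw [hω1]
      simp only [Pi.smul_apply, smul_eq_mul]
      rw [hω2]
    filter_upwards [hsumc, hk_ae] with ω hω1 hω2
    rw [hω1, Finset.sum_apply]
    exact Finset.sum_congr rfl (fun k _ => hω2 k)
  have h5 : ∀ᵐ ω ∂μ, ∀ k, 0 ≤ (μ[p k | m]) ω := by
    rw [ae_all_iff]
    exact fun k => condExp_nonneg (Filter.Eventually.of_forall (hp0 k))
  -- final assembly
  filter_upwards [h1, h2, h3, h4, h5] with ω hω1 hω2 hω3 hω4 hω5
  have key : (μ[fun ω' => (Z ω') ^ 2 | m]) ω + 2 * C * (μ[Z | m]) ω + C ^ 2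
      ≤ ∑ k ∈ K, (qmin ^ 2)⁻¹ * (q k * (μ[p k | m]) ω) := by
    rw [← hω1, hω2, ← hω4]
    exact hω3
  have hsum_le : ∑ k ∈ K, (qmin ^ 2)⁻¹ * (q k * (μ[p k | m]) ω)
      ≤ ∑ k, (qmin ^ 2)⁻¹ * (μ[p k | m]) ω := by
    refine le_trans (Finset.sum_le_sum (fun k _ => ?_))
      (Finset.sum_le_sum_of_subset_of_nonneg (Finset.subset_univ K)
        (fun k _ _ => mul_nonneg (by positivity) (hω5 k)))
    have hle : q k * (μ[p k | m]) ω ≤ (μ[p k | m]) ω := by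
      nlinarith [hω5 k, hq1 k]
    exact mul_le_mul_of_nonneg_left hle (by positivity)
  have hrhs : ∑ k, (qmin ^ 2)⁻¹ * (μ[p k | m]) ω = (∑ k, (μ[p k | m]) ω) / qmin ^ 2 := by
    rw [div_eq_mul_inv, mul_comm, Finset.mul_sum]
  have hsq : 0 ≤ ((μ[Z | m]) ω + C) ^ 2 := sq_nonneg _
  nlinarith [key, hsum_le, hrhs.symm, hsq]
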